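/- arXiv:2210.09689 — 2 statements merged into one kernel-verified Lean document; each statement's English description precedes it below -/
import Mathlib

section
/- If two oriented flat-virtual link diagrams D and D' differ by a flat second Reidemeister move, then X(D) = X(D'). Specifically, the move changes by 2 the number of flat crossings on one or two components of each smoothed diagram D_s, so the parity of the number of flat crossings on each component is unchanged, and the state-sum expressions for X(D) and X(D') coincide. -/
/-!  Combinatorial (Gauss-diagram style) model of oriented flat-virtual link diagrams.

A flat-virtual link diagram is a four-valent graph each of whose vertices (crossings) is
classical, flat, or virtual.  Following Bar-Natan's point of view, a diagram is encoded by
its list of crossings together with the way the four half-edge slots of the crossings are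
connected to each other by strands.  At every crossing the four half-edge slots are
numbered by `Fin 4` in counterclockwise order, opposite slots (`i` and `i + 2`) belonging
to the same strand; at a *classical* crossing, by convention, the strand through the
slots `0, 2` is the overcrossing strand.  The field `loops` records the number of
crossing-free circle components.  Diagrams are oriented: `dir h = true` means that the
strand is directed out of the crossing at the slot `h`. -/

/-- Kinds of vertices (crossings) of a flat-virtual link diagram. -/
inductive VertexKind : Type
  | classical : VertexKind
  | flat : VertexKind
  | virt : VertexKind
  deriving DecidableEq

/-- A combinatorial oriented flat-virtual link diagram. -/
structure FVDiagram : Type where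
  /-- the number of crossings -/
  n : ℕ
  /-- the number of crossing-free circle components -/
  loops : ℕ
  /-- the kind of each crossing -/
  kind : Fin n → VertexKind
  /-- the matching of half-edge slots by edges -/
  pair : Fin n × Fin 4 → Fin n × Fin 4
  pair_invol : ∀ h, pair (pair h) = h
  pair_ne : ∀ h, pair h ≠ h
  /-- orientation: `dir h = true` iff the strand exits the crossing at slot `h` -/
  dir : Fin n × Fin 4 → Bool
  dir_pair : ∀ h, dir (pair h) = ! dir h
  dir_opp : ∀ h : Fin n × Fin 4, dir (h.1, h.2 + 2) = ! dir h

/-- Half-edge slots of a diagram. -/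
abbrev HE (D : FVDiagram) := Fin D.n × Fin 4

/-- The opposite slot at the same crossing (same strand, other side). -/
def opp {D : FVDiagram} (h : HE D) : HE D := (h.1, h.2 + 2)

/-- Strand traversal: from an arrival half-edge, pass straight through the crossing
and follow the next edge to the next arrival half-edge. -/
def trav (D : FVDiagram) (h : HE D) : HE D := D.pair (opp h)

/-- Number of orbits of a self-map (the quotient identifies `x` with `f x`). -/
noncomputable def orbitCount {α : Type*} (f : α → α) : ℕ :=
  Nat.card (Quot fun x y => f x = y)

/-- The number of unicursal components of a flat-virtual link diagram: each circle
component yields exactly two directed traversal orbits. -/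
noncomputable def components (D : FVDiagram) : ℕ :=
  orbitCount (trav D) / 2 + D.loops

/-- `Skip D S h h'` means: starting from the departure half-edge `h` and following the
strand, passing straight through every crossing belonging to `S`, one arrives at `h'`. -/
inductive Skip (D : FVDiagram) (S : Set (Fin D.n)) : HE D → HE D → Prop
  | base (h : HE D) : Skip D S h (D.pair h)
  | step {h h' : HE D} : Skip D S h h' → h'.1 ∈ S → Skip D S h (D.pair (opp h'))

/-- Half-edges whose whole traversal orbit stays inside the crossing set `S`. -/
def ClosedIn (D : FVDiagram) (S : Set (Fin D.n)) : Set (HE D) :=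
  {h | ∀ k : ℕ, ((trav D)^[k] h).1 ∈ S}

/-- The number of circle components running only through crossings of `S`. -/
noncomputable def hiddenLoops (D : FVDiagram) (S : Set (Fin D.n)) : ℕ :=
  Nat.card (Quot fun h h' : ClosedIn D S => trav D h.1 = h'.1) / 2

/-- `RemovalIso D D' S` witnesses that `D` is the diagram obtained from `D'` by deleting
the crossings of `S` and joining the strands straight through them. -/
structure RemovalIso (D D' : FVDiagram) (S : Set (Fin D'.n)) where
  toFun : Fin D.n → Fin D'.n
  inj : Function.Injective toFun
  notMem : ∀ v, toFun v ∉ S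
  surj : ∀ v' : Fin D'.n, v' ∉ S → ∃ v, toFun v = v'
  kind_eq : ∀ v, D'.kind (toFun v) = D.kind v
  dir_eq : ∀ v i, D'.dir (toFun v, i) = D.dir (v, i)
  conn : ∀ h : HE D, Skip D' S (toFun h.1, h.2) (toFun (D.pair h).1, (D.pair h).2)
  loops_eq : D.loops = D'.loops + hiddenLoops D' S

/-- First (classical) Reidemeister move: `D'` is obtained from `D` by adding a kink with a
classical crossing `u` (a loop edge joining two adjacent slots of `u`). -/
def MoveR1 (D D' : FVDiagram) : Prop :=
  ∃ u : Fin D'.n, D'.kind u = VertexKind.classical ∧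
    (∃ i : Fin 4, D'.pair (u, i) = (u, i + 1)) ∧
    Nonempty (RemovalIso D D' {u})

/-- Second (classical) Reidemeister move: `D'` is obtained from `D` by pushing one strand
over another, creating a bigon with two classical crossings `u`, `v`; the overcrossing
strand (slots of even parity) is the same at both crossings. -/
def MoveR2 (D D' : FVDiagram) : Prop :=
  ∃ u v : Fin D'.n, u ≠ v ∧
    D'.kind u = VertexKind.classical ∧ D'.kind v = VertexKind.classical ∧
    (∃ p q : Fin 4, (p : ℕ) % 2 = (q : ℕ) % 2 ∧ D'.pair (u, p) = (v, q) ∧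
      (D'.pair (u, p + 1) = (v, q + 3) ∨ D'.pair (u, p + 3) = (v, q + 1))) ∧
    Nonempty (RemovalIso D D' {u, v})

/-- Flat first Reidemeister move (used for flat links). -/
def MoveFlatR1 (D D' : FVDiagram) : Prop :=
  ∃ u : Fin D'.n, D'.kind u = VertexKind.flat ∧
    (∃ i : Fin 4, D'.pair (u, i) = (u, i + 1)) ∧
    Nonempty (RemovalIso D D' {u})

/-- Flat second Reidemeister move: `D'` is obtained from `D` by creating a bigon with two
flat crossings `u`, `v`. -/
def MoveFlatR2 (D D' : FVDiagram) : Prop :=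
  ∃ u v : Fin D'.n, u ≠ v ∧
    D'.kind u = VertexKind.flat ∧ D'.kind v = VertexKind.flat ∧
    (∃ p q : Fin 4, D'.pair (u, p) = (v, q) ∧
      (D'.pair (u, p + 1) = (v, q + 3) ∨ D'.pair (u, p + 3) = (v, q + 1))) ∧
    Nonempty (RemovalIso D D' {u, v})

/-- Data of a third Reidemeister move: the strand `ℓ` through the crossings `v` and `u`
slides across the crossing `w`.  Before the move the triangle has sides
`(w,c)–(v,e)`, `(w,d)–(u,g)`, `(v,f+2)–(u,h)`; after the move the cyclic order of the
crossings along the two strands through `w` is interchanged, everything else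
(kinds, orientations, and all other edges) being kept. -/
structure R3Data (D D' : FVDiagram) where
  β : Fin D.n ≃ Fin D'.n
  kind_eq : ∀ x, D'.kind (β x) = D.kind x
  dir_eq : ∀ x (i : Fin 4), D'.dir (β x, i) = D.dir (x, i)
  u : Fin D.n
  v : Fin D.n
  w : Fin D.n
  huv : u ≠ v
  huw : u ≠ w
  hvw : v ≠ w
  c : Fin 4
  d : Fin 4
  e : Fin 4
  f : Fin 4
  g : Fin 4
  h : Fin 4
  hcd : d ≠ c ∧ d ≠ c + 2
  t1 : D.pair (w, c) = (v, e)
  t2 : D.pair (w, d) = (u, g)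
  t3 : D.pair (v, f + 2) = (u, h)
  ε : Fin 4
  hε : ε = 1 ∨ ε = 3
  he1 : f + 2 = e + ε
  he2 : g = h + ε
  he3 : c = d + ε
  a1 : D'.pair (β w, c) = (β (D.pair (v, e + 2)).1, (D.pair (v, e + 2)).2)
  a2 : D'.pair (β v, e + 2) = (β w, c + 2)
  a3 : D'.pair (β v, e) = (β (D.pair (w, c + 2)).1, (D.pair (w, c + 2)).2)
  a4 : D'.pair (β u, g) = (β (D.pair (w, d + 2)).1, (D.pair (w, d + 2)).2)
  a5 : D'.pair (β u, g + 2) = (β w, d + 2)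
  a6 : D'.pair (β w, d) = (β (D.pair (u, g + 2)).1, (D.pair (u, g + 2)).2)
  outside : ∀ x : HE D,
    x ∉ ({(w, c), (w, c + 2), (w, d), (w, d + 2), (v, e), (v, e + 2), (u, g), (u, g + 2),
          D.pair (w, c + 2), D.pair (v, e + 2), D.pair (w, d + 2), D.pair (u, g + 2)} :
            Set (HE D)) →
    D'.pair (β x.1, x.2) = (β (D.pair x).1, (D.pair x).2)

/-- Classical third Reidemeister move: all three crossings are classical and the sliding
strand passes either over or under both of the other two strands. -/
def MoveClassicalR3 (D D' : FVDiagram) : Prop :=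
  ∃ T : R3Data D D', D.kind T.u = VertexKind.classical ∧ D.kind T.v = VertexKind.classical ∧
    D.kind T.w = VertexKind.classical ∧ (Even (T.f : ℕ) ↔ Even (T.h : ℕ))

/-- Flat third Reidemeister move: all three crossings are flat. -/
def MoveFlatR3 (D D' : FVDiagram) : Prop :=
  ∃ T : R3Data D D', D.kind T.u = VertexKind.flat ∧ D.kind T.v = VertexKind.flat ∧
    D.kind T.w = VertexKind.flat

/-- Mixed flat-classical third Reidemeister move: a strand containing two consecutive flat
crossings passes through a classical crossing (whose over/under structure is preserved). -/
def MoveMixedR3 (D D' : FVDiagram) : Prop :=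
  ∃ T : R3Data D D', D.kind T.u = VertexKind.flat ∧ D.kind T.v = VertexKind.flat ∧
    D.kind T.w = VertexKind.classical

/-- The set of virtual crossings of a diagram. -/
def virtualSet (D : FVDiagram) : Set (Fin D.n) := {v | D.kind v = VertexKind.virt}

/-- Virtual detour move: `D` and `D'` have a common underlying diagram (`core`) once all
virtual crossings are disregarded; i.e. a strand containing only virtual crossings can be
removed and replaced by any strand with the same endpoints whose new intersections are all
virtual. -/
def MoveDetour (D D' : FVDiagram) : Prop :=
  ∃ C : FVDiagram, (∀ v, C.kind v ≠ VertexKind.virt) ∧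
    Nonempty (RemovalIso C D (virtualSet D)) ∧ Nonempty (RemovalIso C D' (virtualSet D'))

/-- Classical Reidemeister moves (affecting only classical crossings). -/
def ClassicalMove (D D' : FVDiagram) : Prop :=
  MoveR1 D D' ∨ MoveR1 D' D ∨ MoveR2 D D' ∨ MoveR2 D' D ∨
    MoveClassicalR3 D D' ∨ MoveClassicalR3 D' D

/-- Flat Reidemeister moves (second and third, affecting only flat crossings). -/
def FlatMove (D D' : FVDiagram) : Prop :=
  MoveFlatR2 D D' ∨ MoveFlatR2 D' D ∨ MoveFlatR3 D D' ∨ MoveFlatR3 D' D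

/-- The mixed flat-classical third Reidemeister move (either direction). -/
def MixedMove (D D' : FVDiagram) : Prop :=
  MoveMixedR3 D D' ∨ MoveMixedR3 D' D

/-- A single flat-virtual Reidemeister move. -/
def FVMove (D D' : FVDiagram) : Prop :=
  ClassicalMove D D' ∨ FlatMove D D' ∨ MixedMove D D' ∨ MoveDetour D D'

/-- Equivalence of flat-virtual link diagrams: two diagrams represent the same
flat-virtual link iff they are related by a finite sequence of flat-virtual
Reidemeister moves. -/
def FVEquiv : FVDiagram → FVDiagram → Prop := Relation.ReflTransGen FVMove

/-- A single restricted flat-virtual move: the third Reidemeister move with three flat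
crossings is forbidden. -/
def RestrictedMove (D D' : FVDiagram) : Prop :=
  ClassicalMove D D' ∨ MoveFlatR2 D D' ∨ MoveFlatR2 D' D ∨ MixedMove D D' ∨ MoveDetour D D'

/-- Equivalence of diagrams as restricted flat-virtual links. -/
def RestrictedEquiv : FVDiagram → FVDiagram → Prop := Relation.ReflTransGen RestrictedMove
/-! ### The flat-virtual Jones polynomial -/

/-- A state of a diagram: a choice of `0`-smoothing (`false`) or `1`-smoothing (`true`)
at every classical crossing. -/
abbrev State (D : FVDiagram) :=
  {v : Fin D.n // D.kind v = VertexKind.classical} → Bool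

/-- The slot involution describing a smoothing of a classical crossing: the `0`-smoothing
(`A`-smoothing) joins slot `0` to slot `3` and slot `1` to slot `2`; the `1`-smoothing
joins slot `0` to slot `1` and slot `2` to slot `3`. -/
def smoothSlot (b : Bool) : Fin 4 → Fin 4 :=
  if b then ![1, 0, 3, 2] else ![3, 2, 1, 0]

/-- The half-edge at which the strand arriving at `h` leaves its crossing in the smoothed
diagram `D_s`: classical crossings are smoothed according to the state, flat and virtual
crossings are traversed straight. -/
def exitSlot (D : FVDiagram) (s : State D) (h : HE D) : HE D :=
  if hc : D.kind h.1 = VertexKind.classical then (h.1, smoothSlot (s ⟨h.1, hc⟩) h.2)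
  else opp h

/-- Traversal of the smoothed diagram `D_s`. -/
def travS (D : FVDiagram) (s : State D) (h : HE D) : HE D := D.pair (exitSlot D s h)

/-- The number of flat crossings lying on a given component of the smoothed diagram `D_s`
(a flat self-crossing of the component is counted only once). -/
noncomputable def flatCount (D : FVDiagram) (s : State D)
    (c : Quot fun x y : HE D => travS D s x = y) : ℕ :=
  Nat.card {v : Fin D.n // D.kind v = VertexKind.flat ∧
    ∃ i : Fin 4, Quot.mk (fun x y : HE D => travS D s x = y) (v, i) = c}

/-- `γ_even`: the number of components of the smoothed diagram `D_s` carrying an even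
number of flat crossings (each geometric component corresponds to two traversal orbits;
crossing-free circle components carry no flat crossing). -/
noncomputable def gammaEven (D : FVDiagram) (s : State D) : ℕ :=
  Nat.card {c : Quot fun x y : HE D => travS D s x = y // Even (flatCount D s c)} / 2
    + D.loops

/-- `γ_odd`: the number of components of the smoothed diagram `D_s` carrying an odd
number of flat crossings. -/
noncomputable def gammaOdd (D : FVDiagram) (s : State D) : ℕ :=
  Nat.card {c : Quot fun x y : HE D => travS D s x = y // ¬ Even (flatCount D s c)} / 2

/-- `α(s)`: the number of `0`-smoothed classical crossings. -/
noncomputable def alphaS (D : FVDiagram) (s : State D) : ℕ :=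
  Nat.card {c : {v : Fin D.n // D.kind v = VertexKind.classical} // s c = false}

/-- `β(s)`: the number of `1`-smoothed classical crossings. -/
noncomputable def betaS (D : FVDiagram) (s : State D) : ℕ :=
  Nat.card {c : {v : Fin D.n // D.kind v = VertexKind.classical} // s c = true}

/-- The sign (writhe contribution) of a crossing, computed from the orientation; with the
counterclockwise slot convention the sign is `+1` iff the outgoing under-strand slot
immediately follows the outgoing over-strand slot. -/
def crossSign (D : FVDiagram) (v : Fin D.n) : ℤ :=
  if (if D.dir (v, 1) then (1 : Fin 4) else 3) = (if D.dir (v, 0) then (0 : Fin 4) else 2) + 1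
    then 1 else -1

/-- The writhe of an oriented diagram: the sum of the signs of its classical crossings. -/
def writhe (D : FVDiagram) : ℤ :=
  ∑ v ∈ Finset.univ.filter (fun v => D.kind v = VertexKind.classical), crossSign D v

/-- The coefficient ring `ℤ[a, a⁻¹, b]`: polynomials in `b` over Laurent polynomials
in `a`. -/
abbrev LPRing : Type := Polynomial (LaurentPolynomial ℤ)

/-- The (invertible) variable `a` raised to the integer power `k`. -/
noncomputable def Av (k : ℤ) : LPRing := Polynomial.C (LaurentPolynomial.T k)

/-- The variable `b`. -/
noncomputable def bv : LPRing := Polynomial.X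

/-- The flat-virtual Jones polynomial
`X(D) = (−a)^{−3w(D)} ∑_s a^{α(s)−β(s)} (−a²−a⁻²)^{γ_even(s)} b^{γ_odd(s)}`. -/
noncomputable def Xpoly (D : FVDiagram) : LPRing :=
  ((((-3 * writhe D).negOnePow : ℤˣ) : ℤ) • Av (-3 * writhe D)) *
    ∑ s : State D,
      Av ((alphaS D s : ℤ) - (betaS D s : ℤ)) * (-Av 2 - Av (-2)) ^ gammaEven D s *
        bv ^ gammaOdd D s
/-- Transport of a state along the crossing correspondence of a `RemovalIso` (the
classical crossings of the two diagrams are in canonical bijection). -/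
def RemovalIso.pullState {D D' : FVDiagram} {S : Set (Fin D'.n)}
    (ι : RemovalIso D D' S) (s' : State D') : State D :=
  fun c => s' ⟨ι.toFun c.1, (ι.kind_eq c.1).trans c.2⟩

/-- Transport of a state along the crossing correspondence of an `R3Data`. -/
def R3Data.pullState {D D' : FVDiagram} (T : R3Data D D') (s' : State D') : State D :=
  fun c => s' ⟨T.β c.1, (T.kind_eq c.1).trans c.2⟩
/-! ### STATEMENT 6 -/

/-! ### Auxiliary development for Statement 6 -/

open Relation

namespace FlatR2Aux

lemma fin4_add_two_add_two (i : Fin 4) : i + 2 + 2 = i := by revert i; decide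

lemma opp_opp {D : FVDiagram} (h : HE D) : opp (opp h) = h := by
  cases h with
  | mk a i => simp [opp, fin4_add_two_add_two]

lemma smoothSlot_invol (b : Bool) (i : Fin 4) : smoothSlot b (smoothSlot b i) = i := by
  revert b i; decide

lemma exitSlot_fst (D : FVDiagram) (s : State D) (h : HE D) :
    (exitSlot D s h).1 = h.1 := by
  unfold exitSlot
  split <;> rfl

lemma exitSlot_exitSlot (D : FVDiagram) (s : State D) (h : HE D) :
    exitSlot D s (exitSlot D s h) = h := by
  by_cases hc : D.kind h.1 = VertexKind.classical
  · simp only [exitSlot, hc, dif_pos, opp]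
    simp [smoothSlot_invol]
  · simp [exitSlot, hc, opp, fin4_add_two_add_two]

lemma exitSlot_flat {D : FVDiagram} (s : State D) {h : HE D}
    (hf : D.kind h.1 = VertexKind.flat) : exitSlot D s h = opp h := by
  have : ¬ D.kind h.1 = VertexKind.classical := by rw [hf]; intro hh; cases hh
  simp [exitSlot, this]

/-- Inverse of the smoothed traversal. -/
def travSInv (D : FVDiagram) (s : State D) (h : HE D) : HE D := exitSlot D s (D.pair h)

lemma travSInv_travS (D : FVDiagram) (s : State D) (h : HE D) :
    travSInv D s (travS D s h) = h := by
  unfold travSInv travS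
  rw [D.pair_invol, exitSlot_exitSlot]

lemma travS_travSInv (D : FVDiagram) (s : State D) (h : HE D) :
    travS D s (travSInv D s h) = h := by
  unfold travSInv travS
  rw [exitSlot_exitSlot, D.pair_invol]

/-- The smoothed traversal as a permutation. -/
def travSPerm (D : FVDiagram) (s : State D) : Equiv.Perm (HE D) :=
  ⟨travS D s, travSInv D s, travSInv_travS D s, travS_travSInv D s⟩

lemma eqvGen_iterate {α : Type*} (f : α → α) (x : α) (k : ℕ) :
    EqvGen (fun a b => f a = b) x (f^[k] x) := by
  induction k with
  | zero => exact EqvGen.refl x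
  | succ n ih =>
      refine EqvGen.trans _ _ _ ih ?_
      rw [Function.iterate_succ_apply']
      exact EqvGen.rel _ _ rfl

lemma quotMk_iterate {α : Type*} (f : α → α) (x : α) (k : ℕ) :
    Quot.mk (fun a b => f a = b) x = Quot.mk (fun a b => f a = b) (f^[k] x) :=
  Quot.eq.2 (eqvGen_iterate f x k)

lemma eqvGen_iff_sameCycle {α : Type*} [Fintype α] [DecidableEq α] (π : Equiv.Perm α)
    (x y : α) : EqvGen (fun a b => π a = b) x y ↔ π.SameCycle x y := by
  constructor
  · intro h
    induction h with
    | rel a b hab => exact ⟨1, by simpa using hab⟩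
    | refl a => exact ⟨0, rfl⟩
    | symm a b _ ih => exact ih.symm
    | trans a b c _ _ ih1 ih2 => exact ih1.trans ih2
  · intro h
    obtain ⟨i, _, _, hi⟩ := h.exists_pow_eq π
    rw [← hi, Equiv.Perm.coe_pow]
    exact eqvGen_iterate (⇑π) x i

lemma eqvGen_pow {α : Type*} (π : Equiv.Perm α) (x : α) (n : ℕ) :
    EqvGen (fun a b => π a = b) x ((π ^ n) x) := by
  rw [Equiv.Perm.coe_pow]
  exact eqvGen_iterate (⇑π) x n

end FlatR2Aux
namespace FlatR2Aux

section Transport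

variable {D D' : FVDiagram} {S : Set (Fin D'.n)}

/-- Transport of half-edges along a removal isomorphism. -/
def Phi (ι : RemovalIso D D' S) (h : HE D) : HE D' := (ι.toFun h.1, h.2)

lemma Phi_inj (ι : RemovalIso D D' S) : Function.Injective (Phi ι) := by
  rintro ⟨a, i⟩ ⟨b, j⟩ hab
  simp only [Phi, Prod.mk.injEq] at hab
  exact Prod.ext (ι.inj hab.1) hab.2

lemma Phi_fst_notMem (ι : RemovalIso D D' S) (h : HE D) : (Phi ι h).1 ∉ S := ι.notMem h.1

lemma exitSlot_Phi (ι : RemovalIso D D' S) (s' : State D') (h : HE D) :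
    exitSlot D' s' (Phi ι h) = Phi ι (exitSlot D (ι.pullState s') h) := by
  by_cases hc : D.kind h.1 = VertexKind.classical
  · have hc' : D'.kind (ι.toFun h.1) = VertexKind.classical := (ι.kind_eq h.1).trans hc
    simp [exitSlot, Phi, hc, hc', RemovalIso.pullState]
  · have hc' : ¬ D'.kind (ι.toFun h.1) = VertexKind.classical := by
      rw [ι.kind_eq h.1]; exact hc
    simp [exitSlot, Phi, hc, hc', opp]

lemma travS_of_mem (hS : ∀ x ∈ S, D'.kind x = VertexKind.flat) (s' : State D') {h' : HE D'} (hm : h'.1 ∈ S) :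
    travS D' s' h' = D'.pair (opp h') := by
  rw [travS, exitSlot_flat s' (hS _ hm)]

lemma skip_iterate (hS : ∀ x ∈ S, D'.kind x = VertexKind.flat) (s' : State D') {h₀ x : HE D'} (hsk : Skip D' S h₀ x) :
    ∃ k : ℕ, (travS D' s')^[k] (D'.pair h₀) = x ∧
      ∀ j, j < k → ((travS D' s')^[j] (D'.pair h₀)).1 ∈ S := by
  induction hsk with
  | base => exact ⟨0, rfl, fun j hj => absurd hj (Nat.not_lt_zero j)⟩
  | step hsk hmem ih =>
      obtain ⟨k, hk, hj⟩ := ih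
      refine ⟨k + 1, ?_, ?_⟩
      · rw [Function.iterate_succ_apply', hk, travS_of_mem hS s' hmem]
      · intro j hj'
        rcases Nat.lt_succ_iff_lt_or_eq.1 hj' with hlt | heq
        · exact hj j hlt
        · subst heq; rw [hk]; exact hmem

lemma phiStep (hS : ∀ x ∈ S, D'.kind x = VertexKind.flat) (ι : RemovalIso D D' S) (s' : State D') (h : HE D) :
    ∃ k, 0 < k ∧
      (travS D' s')^[k] (Phi ι h) = Phi ι (travS D (ι.pullState s') h) ∧
      ∀ j, 0 < j → j < k → ((travS D' s')^[j] (Phi ι h)).1 ∈ S := by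
  set s := ι.pullState s' with hs
  have hsk := ι.conn (exitSlot D s h)
  obtain ⟨k, hk, hj⟩ := skip_iterate hS s' hsk
  have hpair : D'.pair (ι.toFun (exitSlot D s h).1, (exitSlot D s h).2) =
      travS D' s' (Phi ι h) := by
    have : (ι.toFun (exitSlot D s h).1, (exitSlot D s h).2) = Phi ι (exitSlot D s h) := rfl
    rw [this, ← exitSlot_Phi ι s' h, travS]
  rw [hpair] at hk hj
  refine ⟨k + 1, Nat.succ_pos _, ?_, ?_⟩
  · rw [Function.iterate_succ_apply]
    exact hk
  · intro j hj0 hjk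
    obtain ⟨j', rfl⟩ := Nat.exists_eq_succ_of_ne_zero (Nat.pos_iff_ne_zero.1 hj0)
    rw [Function.iterate_succ_apply]
    exact hj j' (by omega)

lemma orbit_dichotomy (hS : ∀ x ∈ S, D'.kind x = VertexKind.flat) (ι : RemovalIso D D' S) (s' : State D') (h : HE D) (n : ℕ) :
    ((travS D' s')^[n] (Phi ι h)).1 ∈ S ∨
      ∃ h₂ : HE D, EqvGen (fun a b => travS D (ι.pullState s') a = b) h h₂ ∧
        (travS D' s')^[n] (Phi ι h) = Phi ι h₂ := by
  set s := ι.pullState s' with hs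
  set f' := travS D' s' with hf'
  have main : ∀ n : ℕ, ∃ (h₂ : HE D) (j k : ℕ),
      EqvGen (fun a b => travS D s a = b) h h₂ ∧ j < k ∧
      f'^[n] (Phi ι h) = f'^[j] (Phi ι h₂) ∧
      f'^[k] (Phi ι h₂) = Phi ι (travS D s h₂) ∧
      (∀ i, 0 < i → i < k → ((f'^[i] (Phi ι h₂)).1 ∈ S)) := by
    intro n
    induction n with
    | zero =>
        obtain ⟨k, hk0, hk, hint⟩ := phiStep hS ι s' h
        exact ⟨h, 0, k, EqvGen.refl h, hk0, rfl, hk, hint⟩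
    | succ n ih =>
        obtain ⟨h₂, j, k, hE, hjk, hn, hk, hint⟩ := ih
        by_cases hcase : j + 1 < k
        · refine ⟨h₂, j + 1, k, hE, hcase, ?_, hk, hint⟩
          rw [Function.iterate_succ_apply' f' n, hn, ← Function.iterate_succ_apply' f' j]
        · have hjk1 : j + 1 = k := by omega
          obtain ⟨k', hk0', hk', hint'⟩ := phiStep hS ι s' (travS D s h₂)
          refine ⟨travS D s h₂, 0, k', ?_, hk0', ?_, hk', hint'⟩
          · exact EqvGen.trans _ _ _ hE (EqvGen.rel _ _ rfl)
          · rw [Function.iterate_succ_apply' f' n, hn,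
              ← Function.iterate_succ_apply' f' j]
            have h2 : f'^[j + 1] (Phi ι h₂) = Phi ι (travS D s h₂) := by rw [hjk1, hk]
            rw [h2]
            rfl
  obtain ⟨h₂, j, k, hE, hjk, hn, hk, hint⟩ := main n
  rcases Nat.eq_zero_or_pos j with hj0 | hj0
  · subst hj0
    exact Or.inr ⟨h₂, hE, by simpa using hn⟩
  · exact Or.inl (hn ▸ hint j hj0 hjk)

end Transport

end FlatR2Aux
namespace FlatR2Aux

lemma even_natCard_of_involutive {α : Type*} [Finite α] {f : α → α}
    (hinv : Function.Involutive f) (hfix : ∀ x, f x ≠ x) : Even (Nat.card α) := by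
  classical
  cases nonempty_fintype α
  rw [Nat.card_eq_fintype_card]
  set σ : Equiv.Perm α := hinv.toPerm f with hσ
  have h2 : σ ^ 2 = 1 := by
    ext x
    simp [sq, hσ, Function.Involutive.toPerm, hinv x]
  have hsupp : σ.support = Finset.univ := by
    ext x
    simp [Equiv.Perm.mem_support, hσ, Function.Involutive.toPerm, hfix x]
  have hdvd := Equiv.Perm.two_dvd_card_support h2
  rw [hsupp, Finset.card_univ] at hdvd
  exact even_iff_two_dvd.2 hdvd

section Transport2

variable {D D' : FVDiagram} {S : Set (Fin D'.n)}

lemma exists_iterate_of_eqvGen {E : FVDiagram} (s : State E) {x y : HE E}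
    (hE : EqvGen (fun a b => travS E s a = b) x y) : ∃ n : ℕ, (travS E s)^[n] x = y := by
  classical
  have hsc : (travSPerm E s).SameCycle x y := (eqvGen_iff_sameCycle (travSPerm E s) x y).1 hE
  obtain ⟨i, _, _, hi⟩ := hsc.exists_pow_eq (travSPerm E s)
  refine ⟨i, ?_⟩
  rw [← hi, Equiv.Perm.coe_pow]
  rfl

lemma eqvGen_Phi_of_eqvGen (hS : ∀ x ∈ S, D'.kind x = VertexKind.flat)
    (ι : RemovalIso D D' S) (s' : State D') {h₁ h₂ : HE D}
    (hE : EqvGen (fun a b => travS D (ι.pullState s') a = b) h₁ h₂) :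
    EqvGen (fun a b => travS D' s' a = b) (Phi ι h₁) (Phi ι h₂) := by
  induction hE with
  | rel a b hab =>
      obtain ⟨k, _, hk, _⟩ := phiStep hS ι s' a
      rw [hab] at hk
      rw [← hk]
      exact eqvGen_iterate _ _ k
  | refl a => exact EqvGen.refl _
  | symm a b _ ih => exact ih.symm _ _
  | trans a b c _ _ ih1 ih2 => exact ih1.trans _ _ _ ih2

lemma reach_visible (hS : ∀ x ∈ S, D'.kind x = VertexKind.flat)
    (ι : RemovalIso D D' S) (s' : State D') {h : HE D} {y : HE D'} (hy : y.1 ∉ S)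
    (hE : EqvGen (fun a b => travS D' s' a = b) (Phi ι h) y) :
    ∃ h₂ : HE D, EqvGen (fun a b => travS D (ι.pullState s') a = b) h h₂ ∧ Phi ι h₂ = y := by
  obtain ⟨n, hn⟩ := exists_iterate_of_eqvGen s' hE
  rcases orbit_dichotomy hS ι s' h n with hin | ⟨h₂, hE2, heq⟩
  · rw [hn] at hin; exact absurd hin hy
  · exact ⟨h₂, hE2, by rw [← heq, hn]⟩

lemma eqvGen_of_eqvGen_Phi (hS : ∀ x ∈ S, D'.kind x = VertexKind.flat)
    (ι : RemovalIso D D' S) (s' : State D') {h₁ h₂ : HE D}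
    (hE : EqvGen (fun a b => travS D' s' a = b) (Phi ι h₁) (Phi ι h₂)) :
    EqvGen (fun a b => travS D (ι.pullState s') a = b) h₁ h₂ := by
  obtain ⟨h₃, hE3, heq⟩ := reach_visible hS ι s' (Phi_fst_notMem ι h₂) hE
  rwa [Phi_inj ι heq] at hE3

/-! ### Hidden components -/

/-- Inverse of the plain traversal. -/
def travInv (E : FVDiagram) (h : HE E) : HE E := opp (E.pair h)

/-- The plain traversal as a permutation. -/
def travPerm (E : FVDiagram) : Equiv.Perm (HE E) :=
  ⟨trav E, travInv E,
   fun h => by simp [travInv, trav, E.pair_invol, opp_opp],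
   fun h => by simp [travInv, trav, opp_opp, E.pair_invol]⟩

lemma backward_closed {α : Type*} [Fintype α] (π : Equiv.Perm α) (P : α → Prop) (x : α)
    (hx : ∀ k : ℕ, P ((⇑π)^[k] x)) (k : ℕ) : P ((⇑π⁻¹)^[k] x) := by
  have hpos : 0 < orderOf π := orderOf_pos π
  have hinv : π ⁻¹ = π ^ (orderOf π - 1) := by
    rw [eq_comm, eq_inv_iff_mul_eq_one, ← pow_succ, Nat.sub_add_cancel hpos,
      pow_orderOf_eq_one]
  have : (⇑π⁻¹)^[k] x = (⇑π)^[(orderOf π - 1) * k] x := by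
    rw [← Equiv.Perm.coe_pow, ← Equiv.Perm.coe_pow, hinv, ← pow_mul]
  rw [this]
  exact hx _

lemma trav_iterate_opp (E : FVDiagram) (x : HE E) (k : ℕ) :
    (trav E)^[k] (opp x) = opp ((travInv E)^[k] x) := by
  induction k with
  | zero => rfl
  | succ n ih =>
      rw [Function.iterate_succ_apply', ih, Function.iterate_succ_apply']
      show trav E (opp _) = opp (travInv E _)
      simp [trav, travInv, opp_opp, E.pair_invol]

lemma closedIn_opp {x : HE D'} (hx : x ∈ ClosedIn D' S) : opp x ∈ ClosedIn D' S := by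
  intro k
  rw [trav_iterate_opp]
  show ((travInv D' )^[k] x).1 ∈ S
  have := backward_closed (travPerm D') (fun y => y.1 ∈ S) x hx k
  exact this

lemma closedIn_trav_iterate {x : HE D'} (hx : x ∈ ClosedIn D' S) (m : ℕ) :
    (trav D')^[m] x ∈ ClosedIn D' S := by
  intro k
  rw [← Function.iterate_add_apply]
  exact hx (k + m)

lemma iterate_travS_eq_trav (hS : ∀ x ∈ S, D'.kind x = VertexKind.flat) (s' : State D')
    {x : HE D'} (k : ℕ) (hall : ∀ j, j < k → ((trav D')^[j] x).1 ∈ S) :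
    (travS D' s')^[k] x = (trav D')^[k] x := by
  induction k with
  | zero => rfl
  | succ n ih =>
      rw [Function.iterate_succ_apply', Function.iterate_succ_apply',
        ih (fun j hj => hall j (by omega)),
        travS_of_mem hS s' (hall n (by omega))]
      rfl

lemma closedIn_iff_travS (hS : ∀ x ∈ S, D'.kind x = VertexKind.flat) (s' : State D')
    (x : HE D') : x ∈ ClosedIn D' S ↔ ∀ k, ((travS D' s')^[k] x).1 ∈ S := by
  constructor
  · intro hx k
    rw [iterate_travS_eq_trav hS s' k (fun j _ => hx j)]
    exact hx k
  · intro hx k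
    induction k using Nat.strong_induction_on with
    | _ k ih =>
        rw [← iterate_travS_eq_trav hS s' k ih]
        exact hx k

lemma eqvGen_closed (hS : ∀ x ∈ S, D'.kind x = VertexKind.flat) (s' : State D')
    {x y : HE D'} (hx : x ∈ ClosedIn D' S)
    (hE : EqvGen (fun a b => travS D' s' a = b) x y) :
    ∃ m : ℕ, (trav D')^[m] x = y := by
  obtain ⟨m, hm⟩ := exists_iterate_of_eqvGen s' hE
  refine ⟨m, ?_⟩
  rw [← iterate_travS_eq_trav hS s' m (fun j _ => hx j)]
  exact hm

end Transport2

end FlatR2Aux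
namespace FlatR2Aux

section QuotLevel

variable {D D' : FVDiagram} {S : Set (Fin D'.n)}

/-- A component class of the smoothed diagram is *visible* if it contains a half-edge at a
crossing outside `S`. -/
def VisC (S : Set (Fin D'.n)) (s' : State D')
    (c : Quot fun x y : HE D' => travS D' s' x = y) : Prop :=
  ∃ h : HE D', Quot.mk (fun x y : HE D' => travS D' s' x = y) h = c ∧ h.1 ∉ S

/-- The classes of the removed diagram correspond to the visible classes. -/
noncomputable def visEquiv (hS : ∀ x ∈ S, D'.kind x = VertexKind.flat)
    (ι : RemovalIso D D' S) (s' : State D') :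
    (Quot fun x y : HE D => travS D (ι.pullState s') x = y) ≃
      {c : Quot fun x y : HE D' => travS D' s' x = y // VisC S s' c} := by
  refine Equiv.ofBijective
    (Quot.lift
      (fun h => ⟨Quot.mk _ (Phi ι h), ⟨Phi ι h, rfl, Phi_fst_notMem ι h⟩⟩)
      (fun h₁ h₂ hr => Subtype.ext (Quot.eq.2
        (eqvGen_Phi_of_eqvGen hS ι s' (EqvGen.rel _ _ hr))))) ⟨?_, ?_⟩
  · intro c₁ c₂
    induction c₁ using Quot.ind with | _ h₁ => ?_
    induction c₂ using Quot.ind with | _ h₂ => ?_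
    intro hc
    have h12 : Quot.mk (fun x y : HE D' => travS D' s' x = y) (Phi ι h₁) =
        Quot.mk _ (Phi ι h₂) := congrArg Subtype.val hc
    exact Quot.eq.2 (eqvGen_of_eqvGen_Phi hS ι s' (Quot.eq.1 h12))
  · rintro ⟨c, h', hmk, hnot⟩
    obtain ⟨w, hw⟩ := ι.surj h'.1 hnot
    refine ⟨Quot.mk _ (w, h'.2), ?_⟩
    apply Subtype.ext
    have : Phi ι (w, h'.2) = h' := by
      cases h' with
      | mk a i => exact Prod.ext (by simpa [Phi] using hw) rfl
    simp only [Quot.lift_mk]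
    rw [this, hmk]

/-- The iterate of `trav` within a closed set, as an element of the hidden quotient. -/
lemma quotMk_closed_iterate (x : ClosedIn D' S) (m : ℕ) :
    Quot.mk (fun h h' : ClosedIn D' S => trav D' h.1 = h'.1) x =
      Quot.mk (fun h h' : ClosedIn D' S => trav D' h.1 = h'.1)
        ⟨(trav D')^[m] x.1, closedIn_trav_iterate x.2 m⟩ := by
  induction m with
  | zero => congr 1
  | succ n ih =>
      refine ih.trans (Quot.sound ?_)
      show trav D' ((trav D')^[n] x.1) = (trav D')^[n+1] x.1
      rw [Function.iterate_succ_apply']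

/-- The hidden-loop quotient corresponds to the non-visible classes. -/
noncomputable def hidEquiv (hS : ∀ x ∈ S, D'.kind x = VertexKind.flat) (s' : State D') :
    (Quot fun h h' : ClosedIn D' S => trav D' h.1 = h'.1) ≃
      {c : Quot fun x y : HE D' => travS D' s' x = y // ¬ VisC S s' c} := by
  have hwd : ∀ (x y : ClosedIn D' S), trav D' x.1 = y.1 →
      Quot.mk (fun a b : HE D' => travS D' s' a = b) x.1 = Quot.mk _ y.1 := by
    intro x y hxy
    apply Quot.sound
    show travS D' s' x.1 = y.1
    rw [travS_of_mem hS s' (show (x : HE D').1 ∈ S from x.2 0)]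
    exact hxy
  have hnv : ∀ x : ClosedIn D' S,
      ¬ VisC S s' (Quot.mk (fun a b : HE D' => travS D' s' a = b) x.1) := by
    rintro x ⟨h'', hmk, hnot⟩
    have hE : EqvGen (fun a b : HE D' => travS D' s' a = b) x.1 h'' :=
      (Quot.eq.1 hmk).symm
    obtain ⟨m, hm⟩ := eqvGen_closed hS s' x.2 hE
    exact hnot (hm ▸ x.2 m)
  refine Equiv.ofBijective
    (Quot.lift (fun x => (⟨Quot.mk _ x.1, hnv x⟩ :
        {c : Quot fun a b : HE D' => travS D' s' a = b // ¬ VisC S s' c}))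
      (fun x y hxy => Subtype.ext (hwd x y hxy))) ⟨?_, ?_⟩
  · intro c₁ c₂
    induction c₁ using Quot.ind with | _ x => ?_
    induction c₂ using Quot.ind with | _ y => ?_
    intro hc
    have h12 : Quot.mk (fun a b : HE D' => travS D' s' a = b) x.1 = Quot.mk _ y.1 :=
      congrArg Subtype.val hc
    obtain ⟨m, hm⟩ := eqvGen_closed hS s' x.2 (Quot.eq.1 h12)
    rw [quotMk_closed_iterate x m]
    congr 1
    exact Subtype.ext hm
  · rintro ⟨c, hc⟩
    induction c using Quot.ind with | _ h' => ?_
    have hcl : ∀ k : ℕ, ((travS D' s')^[k] h').1 ∈ S := by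
      intro k
      by_contra hk
      exact hc ⟨(travS D' s')^[k] h', (quotMk_iterate (travS D' s') h' k).symm, hk⟩
    exact ⟨Quot.mk _ ⟨h', (closedIn_iff_travS hS s' h').2 hcl⟩, Subtype.ext rfl⟩

/-- Reversal involution on hidden classes. -/
def hiddenOpp : (Quot fun h h' : ClosedIn D' S => trav D' h.1 = h'.1) →
    (Quot fun h h' : ClosedIn D' S => trav D' h.1 = h'.1) :=
  Quot.lift (fun x => Quot.mk _ ⟨opp x.1, closedIn_opp x.2⟩) (by
    intro x y hxy
    refine (Quot.sound ?_).symm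
    show trav D' (opp y.1) = opp x.1
    have h2 : (y : HE D') = D'.pair (opp x.1) := by
      rw [← hxy]; rfl
    rw [trav, opp_opp, h2, D'.pair_invol])

/-- Orientation of a hidden class. -/
def hiddenDir : (Quot fun h h' : ClosedIn D' S => trav D' h.1 = h'.1) → Bool :=
  Quot.lift (fun x => D'.dir x.1) (by
    intro x y hxy
    show D'.dir (x : HE D') = D'.dir (y : HE D')
    rw [← hxy]
    show _ = D'.dir (D'.pair (opp x.1))
    rw [D'.dir_pair (opp x.1)]
    obtain ⟨⟨a, i⟩, hx⟩ := x
    show D'.dir (a, i) = !D'.dir (a, i + 2)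
    rw [D'.dir_opp (a, i)]
    simp)

/-- The number of hidden classes is even. -/
lemma even_card_hidden : Even (Nat.card (Quot fun h h' : ClosedIn D' S =>
    trav D' h.1 = h'.1)) := by
  have hflip : ∀ c, hiddenDir (hiddenOpp c) = ! hiddenDir (c : Quot fun h h' :
      ClosedIn D' S => trav D' h.1 = h'.1) := by
    intro c
    induction c using Quot.ind with | _ x => ?_
    show D'.dir (opp x.1) = ! D'.dir x.1
    obtain ⟨⟨a, i⟩, hx⟩ := x
    exact D'.dir_opp (a, i)
  apply even_natCard_of_involutive (f := hiddenOpp)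
  · intro c
    induction c using Quot.ind with | _ x => ?_
    show Quot.mk _ ⟨opp (opp x.1), _⟩ = Quot.mk _ x
    congr 1
    exact Subtype.ext (opp_opp x.1)
  · intro c hcc
    have h2 := hflip c
    rw [hcc] at h2
    simp at h2

end QuotLevel

end FlatR2Aux
namespace FlatR2Aux

lemma fin4_cases (i p : Fin 4) : i = p ∨ i = p + 1 ∨ i = p + 2 ∨ i = p + 3 := by
  revert i p; decide

lemma fin4_a (x : Fin 4) : x + 1 + 2 = x + 3 := by revert x; decide

lemma fin4_b (x : Fin 4) : x + 3 + 2 = x + 1 := by revert x; decide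

lemma flat_succ {E : FVDiagram} (s : State E) {a : Fin E.n}
    (ha : E.kind a = VertexKind.flat) (i : Fin 4) :
    EqvGen (fun x y : HE E => travS E s x = y) (a, i) (E.pair (a, i + 2)) := by
  refine EqvGen.rel _ _ ?_
  show travS E s (a, i) = _
  rw [travS, exitSlot_flat s (show E.kind ((a, i) : HE E).1 = VertexKind.flat from ha)]
  rfl

lemma flat_pred {E : FVDiagram} (s : State E) {a : Fin E.n}
    (ha : E.kind a = VertexKind.flat) (i : Fin 4) :
    EqvGen (fun x y : HE E => travS E s x = y) (E.pair (a, i)) (a, i + 2) := by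
  have h2 := flat_succ s ha (i + 2)
  rw [fin4_add_two_add_two] at h2
  exact EqvGen.symm _ _ h2

section Bigon

variable {D' : FVDiagram} {u v : Fin D'.n} {p q : Fin 4}

lemma bigon_u_to_v (s' : State D')
    (hku : D'.kind u = VertexKind.flat) (hkv : D'.kind v = VertexKind.flat)
    (hpq : D'.pair (u, p) = (v, q))
    (hbig : D'.pair (u, p + 1) = (v, q + 3) ∨ D'.pair (u, p + 3) = (v, q + 1))
    {h' : HE D'} {i : Fin 4}
    (hE : EqvGen (fun x y : HE D' => travS D' s' x = y) h' (u, i)) :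
    ∃ j, EqvGen (fun x y : HE D' => travS D' s' x = y) h' (v, j) := by
  have hqp : D'.pair (v, q) = (u, p) := by rw [← hpq, D'.pair_invol]
  rcases fin4_cases i p with rfl | rfl | rfl | rfl
  · have h2 := flat_pred s' hkv q
    rw [hqp] at h2
    exact ⟨q + 2, hE.trans _ _ _ h2⟩
  · rcases hbig with hA | hB
    · have hA' : D'.pair (v, q + 3) = (u, p + 1) := by rw [← hA, D'.pair_invol]
      have h2 := flat_pred s' hkv (q + 3)
      rw [hA', fin4_b] at h2
      exact ⟨q + 1, hE.trans _ _ _ h2⟩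
    · have h2 := flat_succ s' hku (p + 1)
      rw [fin4_a, hB] at h2
      exact ⟨q + 1, hE.trans _ _ _ h2⟩
  · have h2 := flat_succ s' hku (p + 2)
    rw [fin4_add_two_add_two, hpq] at h2
    exact ⟨q, hE.trans _ _ _ h2⟩
  · rcases hbig with hA | hB
    · have h2 := flat_succ s' hku (p + 3)
      rw [fin4_b, hA] at h2
      exact ⟨q + 3, hE.trans _ _ _ h2⟩
    · have hB' : D'.pair (v, q + 1) = (u, p + 3) := by rw [← hB, D'.pair_invol]
      have h2 := flat_pred s' hkv (q + 1)
      rw [hB', fin4_a] at h2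
      exact ⟨q + 3, hE.trans _ _ _ h2⟩

lemma bigon_v_to_u (s' : State D')
    (hku : D'.kind u = VertexKind.flat) (hkv : D'.kind v = VertexKind.flat)
    (hpq : D'.pair (u, p) = (v, q))
    (hbig : D'.pair (u, p + 1) = (v, q + 3) ∨ D'.pair (u, p + 3) = (v, q + 1))
    {h' : HE D'} {j : Fin 4}
    (hE : EqvGen (fun x y : HE D' => travS D' s' x = y) h' (v, j)) :
    ∃ i, EqvGen (fun x y : HE D' => travS D' s' x = y) h' (u, i) := by
  have hqp : D'.pair (v, q) = (u, p) := by rw [← hpq, D'.pair_invol]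
  rcases fin4_cases j q with rfl | rfl | rfl | rfl
  · have h2 := flat_pred s' hku p
    rw [hpq] at h2
    exact ⟨p + 2, hE.trans _ _ _ h2⟩
  · rcases hbig with hA | hB
    · have hA' : D'.pair (v, q + 3) = (u, p + 1) := by rw [← hA, D'.pair_invol]
      have h2 := flat_succ s' hkv (q + 1)
      rw [fin4_a, hA'] at h2
      exact ⟨p + 1, hE.trans _ _ _ h2⟩
    · have h2 := flat_pred s' hku (p + 3)
      rw [hB, fin4_b] at h2
      exact ⟨p + 1, hE.trans _ _ _ h2⟩
  · have h2 := flat_succ s' hkv (q + 2)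
    rw [fin4_add_two_add_two, hqp] at h2
    exact ⟨p, hE.trans _ _ _ h2⟩
  · rcases hbig with hA | hB
    · have h2 := flat_pred s' hku (p + 1)
      rw [hA, fin4_a] at h2
      exact ⟨p + 3, hE.trans _ _ _ h2⟩
    · have hB' : D'.pair (v, q + 1) = (u, p + 3) := by rw [← hB, D'.pair_invol]
      have h2 := flat_succ s' hkv (q + 3)
      rw [fin4_b, hB'] at h2
      exact ⟨p + 3, hE.trans _ _ _ h2⟩

end Bigon

end FlatR2Aux
namespace FlatR2Aux

/-- Splitting a subtype along a decidable predicate. -/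
def subtypeSplit {α : Type*} (P Q : α → Prop) [DecidablePred Q] :
    {x // P x} ≃ {x // P x ∧ Q x} ⊕ {x // P x ∧ ¬ Q x} :=
  ((Equiv.sumCompl (fun y : {x // P x} => Q y.1)).symm).trans
    (Equiv.sumCongr (Equiv.subtypeSubtypeEquivSubtypeInter P Q)
      (Equiv.subtypeSubtypeEquivSubtypeInter P (fun x => ¬ Q x)))

section FlatCount

variable {D D' : FVDiagram} {u v : Fin D'.n} {p q : Fin 4}

lemma hS_uv (hku : D'.kind u = VertexKind.flat) (hkv : D'.kind v = VertexKind.flat) :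
    ∀ x ∈ ({u, v} : Set (Fin D'.n)), D'.kind x = VertexKind.flat := by
  rintro x (rfl | rfl) <;> assumption

lemma hidden_flatCount_even (huv : u ≠ v)
    (hku : D'.kind u = VertexKind.flat) (hkv : D'.kind v = VertexKind.flat)
    (hpq : D'.pair (u, p) = (v, q))
    (hbig : D'.pair (u, p + 1) = (v, q + 3) ∨ D'.pair (u, p + 3) = (v, q + 1))
    (s' : State D') {c : Quot fun x y : HE D' => travS D' s' x = y}
    (hc : ¬ VisC {u, v} s' c) : Even (flatCount D' s' c) := by
  classical
  obtain ⟨h', rfl⟩ := Quot.exists_rep c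
  have hmem : h'.1 ∈ ({u, v} : Set (Fin D'.n)) := by
    by_contra hn
    exact hc ⟨h', rfl, hn⟩
  have hu' : ∃ i, EqvGen (fun x y : HE D' => travS D' s' x = y) h' (u, i) := by
    rcases hmem with h1 | h1
    · refine ⟨h'.2, ?_⟩
      rw [show ((u, h'.2) : HE D') = h' from Prod.ext h1.symm rfl]
      exact EqvGen.refl h'
    · have h1 : h'.1 = v := h1
      refine bigon_v_to_u s' hku hkv hpq hbig (j := h'.2) ?_
      rw [show ((v, h'.2) : HE D') = h' from Prod.ext h1.symm rfl]
      exact EqvGen.refl h'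
  obtain ⟨i, hEi⟩ := hu'
  obtain ⟨j, hEj⟩ := bigon_u_to_v s' hku hkv hpq hbig hEi
  have hcard : flatCount D' s' (Quot.mk (fun x y : HE D' => travS D' s' x = y) h') = 2 := by
    rw [flatCount, Nat.card_eq_two_iff]
    refine ⟨⟨u, hku, i, (Quot.eq.2 (EqvGen.symm _ _ hEi))⟩,
      ⟨v, hkv, j, (Quot.eq.2 (EqvGen.symm _ _ hEj))⟩, ?_, ?_⟩
    · intro hteq
      exact huv (congrArg Subtype.val hteq)
    · rw [Set.eq_univ_iff_forall]
      rintro ⟨x, hxf, k, hxk⟩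
      have hxmem : x ∈ ({u, v} : Set (Fin D'.n)) := by
        by_contra hn
        exact hc ⟨(x, k), hxk, hn⟩
      rcases hxmem with h1 | h1
      · exact Set.mem_insert_iff.2 (Or.inl (Subtype.ext h1))
      · exact Set.mem_insert_iff.2 (Or.inr (Set.mem_singleton_iff.2 (Subtype.ext h1)))
  rw [hcard]
  exact even_two

lemma visible_flatCount_even_iff (huv : u ≠ v)
    (hku : D'.kind u = VertexKind.flat) (hkv : D'.kind v = VertexKind.flat)
    (hpq : D'.pair (u, p) = (v, q))
    (hbig : D'.pair (u, p + 1) = (v, q + 3) ∨ D'.pair (u, p + 3) = (v, q + 1))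
    (ι : RemovalIso D D' {u, v}) (s' : State D') (h : HE D) :
    Even (flatCount D' s' (Quot.mk (fun x y : HE D' => travS D' s' x = y) (Phi ι h))) ↔
      Even (flatCount D (ι.pullState s')
        (Quot.mk (fun x y : HE D => travS D (ι.pullState s') x = y) h)) := by
  classical
  have hS := hS_uv hku hkv
  set s := ι.pullState s' with hs
  set P : Fin D'.n → Prop := fun y => D'.kind y = VertexKind.flat ∧
    ∃ i, Quot.mk (fun x y : HE D' => travS D' s' x = y) (y, i) =
      Quot.mk (fun x y : HE D' => travS D' s' x = y) (Phi ι h) with hP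
  have hsplit : flatCount D' s' (Quot.mk (fun x y : HE D' => travS D' s' x = y) (Phi ι h)) =
      Nat.card {y : Fin D'.n // P y ∧ (y = u ∨ y = v)} +
      Nat.card {y : Fin D'.n // P y ∧ ¬ (y = u ∨ y = v)} := by
    rw [flatCount, ← Nat.card_sum]
    exact Nat.card_congr (subtypeSplit P _)
  have houter : Nat.card {y : Fin D'.n // P y ∧ ¬ (y = u ∨ y = v)} =
      flatCount D s (Quot.mk (fun x y : HE D => travS D s x = y) h) := by
    rw [flatCount]
    refine (Nat.card_congr (Equiv.ofBijective
      (fun a : {x : Fin D.n // D.kind x = VertexKind.flat ∧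
          ∃ i, Quot.mk (fun x y : HE D => travS D s x = y) (x, i) =
            Quot.mk (fun x y : HE D => travS D s x = y) h} =>
        (⟨ι.toFun a.1, ⟨(ι.kind_eq a.1).trans a.2.1, by
            obtain ⟨i, hi⟩ := a.2.2
            exact ⟨i, Quot.eq.2 (eqvGen_Phi_of_eqvGen hS ι s' (Quot.eq.1 hi))⟩⟩, by
          intro hor
          refine ι.notMem a.1 ?_
          rcases hor with h1 | h1
          · exact Set.mem_insert_iff.2 (Or.inl h1)
          · exact Set.mem_insert_iff.2 (Or.inr h1)⟩ :
          {y : Fin D'.n // P y ∧ ¬ (y = u ∨ y = v)}))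
      ⟨?_, ?_⟩)).symm
    · intro a b hab
      exact Subtype.ext (ι.inj (congrArg Subtype.val hab))
    · rintro ⟨y, ⟨hyf, i, hyi⟩, hyn⟩
      have hyn' : y ∉ ({u, v} : Set (Fin D'.n)) := by
        intro hmem
        rcases hmem with h1 | h1
        · exact hyn (Or.inl h1)
        · exact hyn (Or.inr h1)
      obtain ⟨w, hw⟩ := ι.surj y hyn'
      have hE : EqvGen (fun x y : HE D' => travS D' s' x = y) (Phi ι h) (y, i) :=
        (Quot.eq.1 hyi).symm
      obtain ⟨h₂, hE2, hPhi⟩ := reach_visible hS ι s' (show ((y, i) : HE D').1 ∉ _ from hyn') hE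
      have hh₂ : h₂ = (w, i) := by
        apply Phi_inj ι
        rw [hPhi]
        exact (Prod.ext (by simpa [Phi] using hw.symm) rfl)
      refine ⟨⟨w, ?_, ⟨i, ?_⟩⟩, Subtype.ext hw⟩
      · rw [← ι.kind_eq w, hw]
        exact hyf
      · rw [← hh₂]
        exact Quot.eq.2 (EqvGen.symm _ _ hE2)
  have hinner : Even (Nat.card {y : Fin D'.n // P y ∧ (y = u ∨ y = v)}) := by
    rcases Classical.em (∃ i, EqvGen (fun x y : HE D' => travS D' s' x = y)
        (Phi ι h) (u, i)) with ⟨i, hEi⟩ | hnone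
    · obtain ⟨j, hEj⟩ := bigon_u_to_v s' hku hkv hpq hbig hEi
      have h2 : Nat.card {y : Fin D'.n // P y ∧ (y = u ∨ y = v)} = 2 := by
        rw [Nat.card_eq_two_iff]
        refine ⟨⟨u, ⟨hku, i, (Quot.eq.2 (EqvGen.symm _ _ hEi))⟩, Or.inl rfl⟩,
          ⟨v, ⟨hkv, j, (Quot.eq.2 (EqvGen.symm _ _ hEj))⟩, Or.inr rfl⟩, ?_, ?_⟩
        · intro hteq
          exact huv (congrArg Subtype.val hteq)
        · rw [Set.eq_univ_iff_forall]
          rintro ⟨y, hy, hyor | hyor⟩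
          · exact Set.mem_insert_iff.2 (Or.inl (Subtype.ext hyor))
          · exact Set.mem_insert_iff.2 (Or.inr (Set.mem_singleton_iff.2 (Subtype.ext hyor)))
      rw [h2]
      exact even_two
    · have : IsEmpty {y : Fin D'.n // P y ∧ (y = u ∨ y = v)} := by
        refine ⟨?_⟩
        rintro ⟨y, ⟨hyf, i, hyi⟩, hyor⟩
        have hE : EqvGen (fun x y : HE D' => travS D' s' x = y) (Phi ι h) (y, i) :=
          (Quot.eq.1 hyi).symm
        rcases hyor with rfl | rfl
        · exact hnone ⟨i, hE⟩
        · exact hnone (bigon_v_to_u s' hku hkv hpq hbig hE)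
      rw [Nat.card_of_isEmpty]
      exact Even.zero
  rw [hsplit, houter, Nat.even_add]
  tauto

end FlatCount

end FlatR2Aux
namespace FlatR2Aux

section Gammas

variable {D D' : FVDiagram} {u v : Fin D'.n} {p q : Fin 4}

lemma gammas_eq (huv : u ≠ v)
    (hku : D'.kind u = VertexKind.flat) (hkv : D'.kind v = VertexKind.flat)
    (hpq : D'.pair (u, p) = (v, q))
    (hbig : D'.pair (u, p + 1) = (v, q + 3) ∨ D'.pair (u, p + 3) = (v, q + 1))
    (ι : RemovalIso D D' {u, v}) (s' : State D') :
    gammaEven D (ι.pullState s') = gammaEven D' s' ∧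
      gammaOdd D (ι.pullState s') = gammaOdd D' s' := by
  classical
  have hS := hS_uv hku hkv
  have hval : ∀ h : HE D, (visEquiv hS ι s')
      (Quot.mk (fun x y : HE D => travS D (ι.pullState s') x = y) h) =
      ⟨Quot.mk (fun x y : HE D' => travS D' s' x = y) (Phi ι h),
        ⟨Phi ι h, rfl, Phi_fst_notMem ι h⟩⟩ := fun h => rfl
  have hpar : ∀ c : Quot fun x y : HE D => travS D (ι.pullState s') x = y,
      Even (flatCount D (ι.pullState s') c) ↔
        Even (flatCount D' s' ((visEquiv hS ι s' c) : Quot fun x y : HE D' =>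
          travS D' s' x = y)) := by
    intro c
    induction c using Quot.ind with | _ h => ?_
    rw [hval h]
    exact (visible_flatCount_even_iff huv hku hkv hpq hbig ι s' h).symm
  have e1 : ∀ P : ℕ → Prop,
      (∀ c, P (flatCount D (ι.pullState s') c) ↔ P (flatCount D' s' ((visEquiv hS ι s' c) :
        Quot fun x y : HE D' => travS D' s' x = y))) →
      Nonempty ({c : Quot fun x y : HE D => travS D (ι.pullState s') x = y // P (flatCount D (ι.pullState s') c)} ≃
        {c : Quot fun x y : HE D' => travS D' s' x = y //
          P (flatCount D' s' c) ∧ VisC {u, v} s' c}) := by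
    intro P hP
    refine ⟨Equiv.trans (Equiv.subtypeEquiv (visEquiv hS ι s')
      (q := fun y => P (flatCount D' s' y.1)) (fun c => hP c)) ?_⟩
    exact (Equiv.subtypeSubtypeEquivSubtypeInter (VisC {u, v} s')
        (fun c => P (flatCount D' s' c))).trans
      (Equiv.subtypeEquivRight (fun c => and_comm))
  have hEvenCard : Nat.card {c : Quot fun x y : HE D' => travS D' s' x = y //
      Even (flatCount D' s' c)} =
      Nat.card {c : Quot fun x y : HE D => travS D (ι.pullState s') x = y // Even (flatCount D (ι.pullState s') c)} +
      Nat.card (Quot fun h h' : ClosedIn D' {u, v} => trav D' h.1 = h'.1) := by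
    rw [← Nat.card_sum]
    refine Nat.card_congr (Equiv.trans (subtypeSplit _ (VisC {u, v} s')) ?_)
    refine Equiv.sumCongr ?_ ?_
    · exact ((e1 Even hpar).some).symm
    · refine Equiv.symm ((hidEquiv hS s').trans (Equiv.subtypeEquivRight (fun c => ?_)))
      exact ⟨fun hnv => ⟨hidden_flatCount_even huv hku hkv hpq hbig s' hnv, hnv⟩,
        fun hh => hh.2⟩
  have hOddCard : Nat.card {c : Quot fun x y : HE D' => travS D' s' x = y //
      ¬ Even (flatCount D' s' c)} =
      Nat.card {c : Quot fun x y : HE D => travS D (ι.pullState s') x = y // ¬ Even (flatCount D (ι.pullState s') c)} := by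
    have h0 : Nat.card {c : Quot fun x y : HE D' => travS D' s' x = y //
        ¬ Even (flatCount D' s' c) ∧ ¬ VisC {u, v} s' c} = 0 := by
      have : IsEmpty {c : Quot fun x y : HE D' => travS D' s' x = y //
          ¬ Even (flatCount D' s' c) ∧ ¬ VisC {u, v} s' c} := by
        refine ⟨?_⟩
        rintro ⟨c, hne, hnv⟩
        exact hne (hidden_flatCount_even huv hku hkv hpq hbig s' hnv)
      exact Nat.card_of_isEmpty
    have hsplit : Nat.card {c : Quot fun x y : HE D' => travS D' s' x = y //
        ¬ Even (flatCount D' s' c)} =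
        Nat.card {c : Quot fun x y : HE D' => travS D' s' x = y //
          ¬ Even (flatCount D' s' c) ∧ VisC {u, v} s' c} +
        Nat.card {c : Quot fun x y : HE D' => travS D' s' x = y //
          ¬ Even (flatCount D' s' c) ∧ ¬ VisC {u, v} s' c} := by
      rw [← Nat.card_sum]
      exact Nat.card_congr (subtypeSplit _ (VisC {u, v} s'))
    rw [hsplit, h0]
    have := Nat.card_congr ((e1 (fun n => ¬ Even n) (fun c => not_congr (hpar c))).some)
    omega
  have hhl : Nat.card (Quot fun h h' : ClosedIn D' {u, v} => trav D' h.1 = h'.1) =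
      2 * hiddenLoops D' {u, v} := by
    obtain ⟨t, ht⟩ := even_card_hidden (D' := D') (S := {u, v})
    simp only [hiddenLoops]
    omega
  have hloops := ι.loops_eq
  constructor
  · simp only [gammaEven]
    rw [hEvenCard, hhl, hloops]
    omega
  · simp only [gammaOdd]
    rw [hOddCard]

end Gammas

end FlatR2Aux
namespace FlatR2Aux

section Part1

variable {D D' : FVDiagram} {S : Set (Fin D'.n)}

/-- The classical crossings of the two diagrams are in canonical bijection. -/
noncomputable def classEquiv (hS : ∀ x ∈ S, D'.kind x = VertexKind.flat)
    (ι : RemovalIso D D' S) :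
    {x : Fin D.n // D.kind x = VertexKind.classical} ≃
      {x' : Fin D'.n // D'.kind x' = VertexKind.classical} := by
  refine Equiv.ofBijective (fun a => ⟨ι.toFun a.1, (ι.kind_eq a.1).trans a.2⟩) ⟨?_, ?_⟩
  · intro a b hab
    exact Subtype.ext (ι.inj (congrArg Subtype.val hab))
  · rintro ⟨y, hy⟩
    have hyn : y ∉ S := by
      intro hmem
      rw [hS y hmem] at hy
      cases hy
    obtain ⟨w, hw⟩ := ι.surj y hyn
    refine ⟨⟨w, ?_⟩, Subtype.ext hw⟩
    rw [← ι.kind_eq w, hw]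
    exact hy

lemma classEquiv_apply (hS : ∀ x ∈ S, D'.kind x = VertexKind.flat)
    (ι : RemovalIso D D' S) (a : {x : Fin D.n // D.kind x = VertexKind.classical}) :
    classEquiv hS ι a = ⟨ι.toFun a.1, (ι.kind_eq a.1).trans a.2⟩ := rfl

lemma pullState_apply (hS : ∀ x ∈ S, D'.kind x = VertexKind.flat)
    (ι : RemovalIso D D' S) (s' : State D')
    (c : {x : Fin D.n // D.kind x = VertexKind.classical}) :
    ι.pullState s' c = s' (classEquiv hS ι c) := by
  rw [classEquiv_apply]
  rfl

/-- Transport of states as an equivalence. -/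
noncomputable def stateEquiv (hS : ∀ x ∈ S, D'.kind x = VertexKind.flat)
    (ι : RemovalIso D D' S) : State D' ≃ State D where
  toFun := ι.pullState
  invFun := fun s c' => s ((classEquiv hS ι).symm c')
  left_inv := by
    intro s'
    funext c'
    show ι.pullState s' ((classEquiv hS ι).symm c') = s' c'
    rw [pullState_apply hS ι, Equiv.apply_symm_apply]
  right_inv := by
    intro s
    funext c
    rw [pullState_apply hS ι]
    show s ((classEquiv hS ι).symm ((classEquiv hS ι) c)) = s c
    rw [Equiv.symm_apply_apply]

lemma alphaS_eq (hS : ∀ x ∈ S, D'.kind x = VertexKind.flat)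
    (ι : RemovalIso D D' S) (s' : State D') :
    alphaS D (ι.pullState s') = alphaS D' s' := by
  rw [alphaS, alphaS]
  refine Nat.card_congr (Equiv.subtypeEquiv (classEquiv hS ι) (fun c => ?_))
  rw [pullState_apply hS ι]

lemma betaS_eq (hS : ∀ x ∈ S, D'.kind x = VertexKind.flat)
    (ι : RemovalIso D D' S) (s' : State D') :
    betaS D (ι.pullState s') = betaS D' s' := by
  rw [betaS, betaS]
  refine Nat.card_congr (Equiv.subtypeEquiv (classEquiv hS ι) (fun c => ?_))
  rw [pullState_apply hS ι]

lemma writhe_eq (hS : ∀ x ∈ S, D'.kind x = VertexKind.flat) (ι : RemovalIso D D' S) :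
    writhe D = writhe D' := by
  classical
  rw [writhe, writhe,
    Finset.sum_subtype (p := fun x => D.kind x = VertexKind.classical) _
      (fun x => by simp) (fun x => crossSign D x),
    Finset.sum_subtype (p := fun x => D'.kind x = VertexKind.classical) _
      (fun x => by simp) (fun x => crossSign D' x)]
  refine Fintype.sum_equiv (classEquiv hS ι) _ _ (fun c => ?_)
  rw [classEquiv_apply]
  show crossSign D c.1 = crossSign D' (ι.toFun c.1)
  rw [crossSign, crossSign, ι.dir_eq c.1 0, ι.dir_eq c.1 1]

end Part1

section XpolyEq

variable {D D' : FVDiagram} {u v : Fin D'.n} {p q : Fin 4}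

lemma Xpoly_eq (huv : u ≠ v)
    (hku : D'.kind u = VertexKind.flat) (hkv : D'.kind v = VertexKind.flat)
    (hpq : D'.pair (u, p) = (v, q))
    (hbig : D'.pair (u, p + 1) = (v, q + 3) ∨ D'.pair (u, p + 3) = (v, q + 1))
    (ι : RemovalIso D D' {u, v}) : Xpoly D = Xpoly D' := by
  classical
  have hS := hS_uv hku hkv
  rw [Xpoly, Xpoly, writhe_eq hS ι]
  congr 1
  refine (Fintype.sum_equiv (stateEquiv hS ι) _ _ (fun s' => ?_)).symm
  show _ = Av ((alphaS D (ι.pullState s') : ℤ) - (betaS D (ι.pullState s') : ℤ)) *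
    (-Av 2 - Av (-2)) ^ gammaEven D (ι.pullState s') * bv ^ gammaOdd D (ι.pullState s')
  rw [alphaS_eq hS ι s', betaS_eq hS ι s', (gammas_eq huv hku hkv hpq hbig ι s').1,
    (gammas_eq huv hku hkv hpq hbig ι s').2]

end XpolyEq

end FlatR2Aux

/-- If two oriented flat-virtual link diagrams differ by a flat second Reidemeister move
then `X(D) = X(D')`.  Specifically, the move changes by `2` the number of flat crossings
on one or two components of each smoothed diagram `D_s`, so the parity of the number of
flat crossings on each component is unchanged and the state-sum expressions coincide:
for every state the numbers `γ_even` and `γ_odd` of the two smoothed diagrams agree. -/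
theorem Xpoly_flat_second_Reidemeister :
    (∀ D D' : FVDiagram, MoveFlatR2 D D' ∨ MoveFlatR2 D' D → Xpoly D = Xpoly D') ∧
    (∀ (D D' : FVDiagram) (u v : Fin D'.n), u ≠ v →
      D'.kind u = VertexKind.flat → D'.kind v = VertexKind.flat →
      (∃ p q : Fin 4, D'.pair (u, p) = (v, q) ∧
        (D'.pair (u, p + 1) = (v, q + 3) ∨ D'.pair (u, p + 3) = (v, q + 1))) →
      ∀ (ι : RemovalIso D D' {u, v}) (s' : State D'),
        gammaEven D (ι.pullState s') = gammaEven D' s' ∧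
        gammaOdd D (ι.pullState s') = gammaOdd D' s') := by
  constructor
  · rintro D D' (⟨u, v, huv, hku, hkv, ⟨p, q, hpq, hbig⟩, ⟨ι⟩⟩ |
      ⟨u, v, huv, hku, hkv, ⟨p, q, hpq, hbig⟩, ⟨ι⟩⟩)
    · exact FlatR2Aux.Xpoly_eq huv hku hkv hpq hbig ι
    · exact (FlatR2Aux.Xpoly_eq huv hku hkv hpq hbig ι).symm
  · rintro D D' u v huv hku hkv ⟨p, q, hpq, hbig⟩ ι s'
    exact FlatR2Aux.gammas_eq huv hku hkv hpq hbig ι s'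
end

section
/- For the flat-virtual knot diagram W obtained from the non-trivial component of the Whitehead link in the full torus via φ_2 (a diagram with two classical crossings and two flat crossings), the flat-virtual Jones polynomial equals X(W) = (−a)^{−6}[a²(−a²−a^{−2})b² + 2b² + a^{−2}(−a²−a^{−2})] = (a^{−6} − a^{−2})b² − a^{−10} − a^{−6}. -/
/-! ### The flat-virtual knot `W` obtained from the Whitehead link

`W` is the flat-virtual knot diagram obtained by the map `φ₂` from the diagram in the
full torus of the non-trivial component of the Whitehead link: it has two classical
crossings (both of writhe `+1`) and two flat crossings, and its Gauss sequence is
`C₀ F₃ F₃ C₀ C₁ F₂ F₂ C₁`. -/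

/-- The edge matching of the diagram `W` (crossings `0`, `1` classical, `2`, `3` flat). -/
def Wpair : Fin 4 × Fin 4 → Fin 4 × Fin 4 := fun h =>
  ![![((1 : Fin 4), (3 : Fin 4)), (3, 3), (3, 0), (1, 0)],
    ![(0, 3), (2, 3), (2, 0), (0, 0)],
    ![(1, 2), (2, 2), (2, 1), (1, 1)],
    ![(0, 2), (3, 2), (3, 1), (0, 1)]] h.1 h.2

/-- The flat-virtual knot diagram `W` obtained from the non-trivial component of the
Whitehead link in the full torus via `φ₂`. -/
def Wdiag : FVDiagram where
  n := 4
  loops := 0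
  kind := ![VertexKind.classical, VertexKind.classical, VertexKind.flat, VertexKind.flat]
  pair := Wpair
  pair_invol := by decide
  pair_ne := by decide
  dir := fun h => decide (2 ≤ (h.2 : ℕ))
  dir_pair := by decide
  dir_opp := by decide

/-- The trivial flat-virtual knot diagram: a single circle with no crossings. -/
def unknotDiag : FVDiagram where
  n := 0
  loops := 1
  kind := fun v => v.elim0
  pair := fun h => h.1.elim0
  pair_invol := fun h => h.1.elim0
  pair_ne := fun h => h.1.elim0
  dir := fun h => h.1.elim0
  dir_pair := fun h => h.1.elim0
  dir_opp := fun h => h.1.elim0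

/-! ### Auxiliary machinery for the computation -/

section QuotOrbit

variable {α : Type*}

lemma mk_iterate_aux (f : α → α) (x : α) (n : ℕ) :
    Quot.mk (fun x y => f x = y) (f^[n] x) = Quot.mk (fun x y => f x = y) x := by
  induction n with
  | zero => rfl
  | succ n ih =>
    rw [Function.iterate_succ_apply']
    exact (Quot.sound (r := fun x y => f x = y) rfl).symm.trans ih

/-- Explicit equivalence between the orbit quotient of `f` and `Fin k`, given an orbit
classifier `c`, a section `σ`, and connectivity witnesses. -/
def quotEquivAux (f : α → α) {k : ℕ} (c : α → Fin k)
    (hc : ∀ x, c (f x) = c x) (σ : Fin k → α) (hσ : ∀ i, c (σ i) = i)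
    (hconn : ∀ x, ∃ n : ℕ, f^[n] (σ (c x)) = x) :
    (Quot fun x y => f x = y) ≃ Fin k where
  toFun := Quot.lift c fun x y h => by rw [← h, hc]
  invFun i := Quot.mk _ (σ i)
  left_inv := by
    refine Quot.ind fun x => ?_
    obtain ⟨n, hn⟩ := hconn x
    calc Quot.mk (fun x y => f x = y) (σ (c x))
        = Quot.mk (fun x y => f x = y) (f^[n] (σ (c x))) := (mk_iterate_aux f _ n).symm
      _ = Quot.mk (fun x y => f x = y) x := by rw [hn]
  right_inv i := hσ i

lemma mk_eq_iff_aux (f : α → α) {k : ℕ} (c : α → Fin k)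
    (hc : ∀ x, c (f x) = c x) (σ : Fin k → α) (hσ : ∀ i, c (σ i) = i)
    (hconn : ∀ x, ∃ n : ℕ, f^[n] (σ (c x)) = x) (x y : α) :
    Quot.mk (fun x y => f x = y) x = Quot.mk (fun x y => f x = y) y ↔ c x = c y :=
  ((quotEquivAux f c hc σ hσ hconn).apply_eq_iff_eq
    (x := Quot.mk _ x) (y := Quot.mk _ y)).symm

lemma conn_of_fin_aux (f : α → α) (g : α → α) (N : ℕ)
    (h : ∀ x, ∃ n : Fin N, f^[n.1] (g x) = x) : ∀ x, ∃ n : ℕ, f^[n] (g x) = x :=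
  fun x => ⟨(h x).choose.1, (h x).choose_spec⟩

end QuotOrbit

/-- Evaluation of `γ_even` and `γ_odd` of `Wdiag` at a state `s`, given an explicit
orbit classifier for the smoothed traversal. -/
lemma gamma_eval (s : State Wdiag) {k : ℕ} (c : HE Wdiag → Fin k)
    (hc : ∀ x, c (travS Wdiag s x) = c x) (σ : Fin k → HE Wdiag)
    (hσ : ∀ i, c (σ i) = i)
    (hconn : ∀ x, ∃ n : ℕ, (travS Wdiag s)^[n] (σ (c x)) = x)
    (F : Fin k → ℕ)
    (hF : ∀ i : Fin k, Fintype.card {v : Fin Wdiag.n // Wdiag.kind v = VertexKind.flat ∧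
      ∃ j : Fin 4, c (v, j) = i} = F i)
    (ge go : ℕ)
    (hge : Fintype.card {i : Fin k // Even (F i)} = ge)
    (hgo : Fintype.card {i : Fin k // ¬ Even (F i)} = go) :
    gammaEven Wdiag s = ge / 2 ∧ gammaOdd Wdiag s = go / 2 := by
  have hfc : ∀ x : HE Wdiag, flatCount Wdiag s (Quot.mk _ x) = F (c x) := by
    intro x
    unfold flatCount
    refine (Nat.card_congr (Equiv.subtypeEquivRight fun v => ?_)).trans
      (Nat.card_eq_fintype_card.trans (hF (c x)))
    exact and_congr_right fun _ => exists_congr fun j =>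
      mk_eq_iff_aux (travS Wdiag s) c hc σ hσ hconn (v, j) x
  have hiff : ∀ q, Even (flatCount Wdiag s q) ↔
      Even (F (quotEquivAux (travS Wdiag s) c hc σ hσ hconn q)) := by
    refine Quot.ind fun x => ?_
    rw [hfc]
    exact Iff.rfl
  constructor
  · unfold gammaEven
    rw [Nat.card_congr (Equiv.subtypeEquiv (q := fun i => Even (F i))
        (quotEquivAux (travS Wdiag s) c hc σ hσ hconn) hiff),
      Nat.card_eq_fintype_card, hge]
    rfl
  · unfold gammaOdd
    rw [Nat.card_congr (Equiv.subtypeEquiv (q := fun i => ¬ Even (F i))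
        (quotEquivAux (travS Wdiag s) c hc σ hσ hconn) fun q => not_congr (hiff q)),
      Nat.card_eq_fintype_card, hgo]

lemma alpha_eval (s : State Wdiag) (m : ℕ)
    (h : Fintype.card {c : {v : Fin Wdiag.n // Wdiag.kind v = VertexKind.classical} //
      s c = false} = m) : alphaS Wdiag s = m := by
  unfold alphaS; rw [Nat.card_eq_fintype_card, h]

lemma beta_eval (s : State Wdiag) (m : ℕ)
    (h : Fintype.card {c : {v : Fin Wdiag.n // Wdiag.kind v = VertexKind.classical} //
      s c = true} = m) : betaS Wdiag s = m := by
  unfold betaS; rw [Nat.card_eq_fintype_card, h]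

/-- The state of `Wdiag` smoothing crossing `0` by `b0` and crossing `1` by `b1`. -/
def sB (b0 b1 : Bool) : State Wdiag := fun v => if (v.1 : ℕ) = 0 then b0 else b1

/-- Enumeration of the states of `Wdiag`. -/
def stateEquiv : Bool × Bool ≃ State Wdiag where
  toFun p := sB p.1 p.2
  invFun s := (s ⟨⟨0, by decide⟩, by decide⟩, s ⟨⟨1, by decide⟩, by decide⟩)
  left_inv p := by simp [sB]
  right_inv s := by
    funext v
    obtain ⟨v, hv⟩ := v
    fin_cases v
    · simp [sB]
    · simp [sB]
    · exact absurd hv (by decide)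
    · exact absurd hv (by decide)

lemma Av_mul (k l : ℤ) : Av k * Av l = Av (k + l) := by
  unfold Av
  rw [← Polynomial.C_mul, ← LaurentPolynomial.T_add]

lemma Av_zero : Av 0 = 1 := by
  unfold Av
  rw [LaurentPolynomial.T_zero, Polynomial.C_1]

/-- A half-edge of `Wdiag` from a pair of `Fin 4` indices. -/
def heW (v i : Fin 4) : HE Wdiag := (v, i)

/-- Orbit classifiers for the four states of `Wdiag`. -/
def c00 : HE Wdiag → Fin 6 := fun h =>
  ![![0,1,2,3], ![0,4,5,3], ![4,4,5,5], ![1,1,2,2]] h.1 h.2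
def σ00 : Fin 6 → HE Wdiag := ![heW 0 0, heW 0 1, heW 0 2, heW 0 3, heW 1 1, heW 1 2]
def c01 : HE Wdiag → Fin 4 := fun h =>
  ![![0,1,2,3], ![0,3,0,3], ![3,3,0,0], ![1,1,2,2]] h.1 h.2
def σ01 : Fin 4 → HE Wdiag := ![heW 0 0, heW 0 1, heW 0 2, heW 0 3]
def c10 : HE Wdiag → Fin 4 := fun h =>
  ![![0,1,0,1], ![0,2,3,1], ![2,2,3,3], ![1,1,0,0]] h.1 h.2
def σ10 : Fin 4 → HE Wdiag := ![heW 0 0, heW 0 1, heW 1 1, heW 1 2]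
def c11 : HE Wdiag → Fin 2 := fun h =>
  ![![0,1,0,1], ![0,1,0,1], ![1,1,0,0], ![1,1,0,0]] h.1 h.2
def σ11 : Fin 2 → HE Wdiag := ![heW 0 0, heW 0 1]


/-! ### STATEMENT 9 -/

/-- For the flat-virtual knot diagram `W` obtained from the non-trivial component of the
Whitehead link in the full torus via `φ₂` (two classical crossings of writhe `+1` each
and two flat crossings), the flat-virtual Jones polynomial equals
`X(W) = (−a)⁻⁶ [a²(−a²−a⁻²)b² + 2b² + a⁻²(−a²−a⁻²)] = (a⁻⁶ − a⁻²)b² − a⁻¹⁰ − a⁻⁶`. -/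
theorem Xpoly_Whitehead_knot :
    Xpoly Wdiag =
      Av (-6) *
        (Av 2 * (-Av 2 - Av (-2)) * bv ^ 2 + 2 * bv ^ 2 + Av (-2) * (-Av 2 - Av (-2))) ∧
    Xpoly Wdiag = (Av (-6) - Av (-2)) * bv ^ 2 - Av (-10) - Av (-6) := by
  have hw : writhe Wdiag = 2 := by decide
  have g00 := gamma_eval (sB false false) c00 (by decide) σ00 (by decide)
    (conn_of_fin_aux _ _ 8 (by decide)) ![0,1,1,0,1,1] (by decide) 2 4 (by decide) (by decide)
  have g01 := gamma_eval (sB false true) c01 (by decide) σ01 (by decide)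
    (conn_of_fin_aux _ _ 8 (by decide)) ![1,1,1,1] (by decide) 0 4 (by decide) (by decide)
  have g10 := gamma_eval (sB true false) c10 (by decide) σ10 (by decide)
    (conn_of_fin_aux _ _ 8 (by decide)) ![1,1,1,1] (by decide) 0 4 (by decide) (by decide)
  have g11 := gamma_eval (sB true true) c11 (by decide) σ11 (by decide)
    (conn_of_fin_aux _ _ 8 (by decide)) ![2,2] (by decide) 2 0 (by decide) (by decide)
  have a00 := alpha_eval (sB false false) 2 (by decide)
  have a01 := alpha_eval (sB false true) 1 (by decide)
  have a10 := alpha_eval (sB true false) 1 (by decide)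
  have a11 := alpha_eval (sB true true) 0 (by decide)
  have b00 := beta_eval (sB false false) 0 (by decide)
  have b01 := beta_eval (sB false true) 1 (by decide)
  have b10 := beta_eval (sB true false) 1 (by decide)
  have b11 := beta_eval (sB true true) 2 (by decide)
  have hsum : ∀ G : State Wdiag → LPRing, (∑ s : State Wdiag, G s) =
      G (sB true true) + G (sB true false) + (G (sB false true) + G (sB false false)) := by
    intro G
    rw [← Fintype.sum_equiv stateEquiv (fun p => G (sB p.1 p.2)) G (fun p => rfl),
      Fintype.sum_prod_type, Fintype.sum_bool, Fintype.sum_bool, Fintype.sum_bool]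
  have hX : Xpoly Wdiag = Av (-6) *
      (Av 2 * (-Av 2 - Av (-2)) * bv ^ 2 + 2 * bv ^ 2 + Av (-2) * (-Av 2 - Av (-2))) := by
    unfold Xpoly
    rw [hw, hsum, a00, a01, a10, a11, b00, b01, b10, b11,
      g00.1, g00.2, g01.1, g01.2, g10.1, g10.2, g11.1, g11.2]
    have h6 : (-3 * 2 : ℤ) = -6 := by norm_num
    rw [h6, Int.negOnePow_even (-6) ⟨-3, by norm_num⟩]
    norm_num [Av_zero]
    left
    ring
  refine ⟨hX, ?_⟩
  rw [hX]
  have h2 : Av (-6) * Av 2 * Av 2 = Av (-2) := by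
    rw [Av_mul, Av_mul]; norm_num
  have h3 : Av (-6) * Av 2 * Av (-2) = Av (-6) := by
    rw [Av_mul, Av_mul]; norm_num
  have h4 : Av (-6) * Av (-2) * Av (-2) = Av (-10) := by
    rw [Av_mul, Av_mul]; norm_num
  linear_combination (-bv ^ 2) * h2 + (-bv ^ 2 - 1) * h3 - h4
end
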